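/- Residual rate for ProxPnP-DRS: let 0 ≤ L < 1, let φ : ℝⁿ → ℝ be differentiable, M-weakly convex with M = L/(L+1), bounded below, and with ∇φ (L/(1−L))-Lipschitz; let f : ℝⁿ → ℝ be bounded below, λ > 0, and β ∈ (0,1) satisfy β(2L³ − 3L² + 1) + (2L² + L − 1) < 0. Let the sequences (x_k), (y_k), (z_k) satisfy, for each k: y_{k+1} is the unique minimizer over ℝⁿ of u ↦ φ(u) + (1/2)‖u − x_k‖²; z_{k+1} is a minimizer over ℝⁿ of u ↦ λf(u) + (1/2)‖u − (2y_{k+1} − x_k)‖²; x_{k+1} = x_k + 2β(z_{k+1} − y_{k+1}). Set F^{DR}_k = F^{DR}(x_{k−1}, y_k, z_k) with F^{DR}(x,y,z) = λf(z) + φ(y) + ⟨y−x, y−z⟩ + (1/2)‖y−z‖², δ = (1/2)(1−L)²( (1/β)(1 − L²/(1−L)²) − (1+M) ), and B = λ·inf f + inf φ. Then δ > 0, F^{DR}_k ≥ B for all k ≥ 1, F^{DR}_k − F^{DR}_{k+1} ≥ δ·‖x_k − x_{k−1}‖² = 4β²δ·‖z_k − y_k‖² for all k ≥ 1, and for every K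 ≥ 1, min_{1 ≤ k ≤ K} ‖z_k − y_k‖² ≤ (F^{DR}_1 − B)/(4β²δ·K); in particular ‖y_k − z_k‖ → 0. -/

import Mathlib

open RealInnerProductSpace

variable {E : Type*} [NormedAddCommGroup E] [InnerProductSpace ℝ E] [CompleteSpace E]

/-- Gradient of `u ↦ c * ‖u - x₀‖ ^ 2`. -/
lemma hasGradientAt_const_mul_norm_sq (c : ℝ) (x₀ a : E) :
    HasGradientAt (fun u => c * ‖u - x₀‖ ^ 2) ((2 * c) • (a - x₀)) a := by
  have hid : HasFDerivAt (fun u : E => u - x₀) (ContinuousLinearMap.id ℝ E) a :=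
    (hasFDerivAt_id a).sub_const x₀
  have hin := (hid.inner ℝ hid).const_mul c
  rw [hasGradientAt_iff_hasFDerivAt]
  have hfun : (fun u : E => c * ‖u - x₀‖ ^ 2) = fun u => c * ⟪u - x₀, u - x₀⟫ := by
    funext u; rw [real_inner_self_eq_norm_sq]
  rw [hfun]
  refine hin.congr_fderiv ?_
  apply ContinuousLinearMap.ext
  intro v
  simp [fderivInnerCLM_apply, InnerProductSpace.toDual_apply_apply, inner_smul_left,
    inner_sub_left, inner_sub_right, real_inner_comm]
  ring

/-- Derivative of a function along a line, from its gradient. -/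
lemma line_hasDerivAt (ψ : E → ℝ) (ψ' : E → E) (hd : ∀ p, HasGradientAt ψ (ψ' p) p)
    (u w : E) (t : ℝ) :
    HasDerivAt (fun s : ℝ => ψ (u + s • w)) ⟪ψ' (u + t • w), w⟫ t := by
  have hline : HasDerivAt (fun s : ℝ => u + s • w) w t := by
    simpa using ((hasDerivAt_id t).smul_const w).const_add u
  have h := ((hd (u + t • w)).hasFDerivAt).comp_hasDerivAt t hline
  exact h

/-- Gradient inequality for a convex differentiable function. -/
lemma convex_gradient_ineq (ψ : E → ℝ) (ψ' : E → E)
    (hc : ConvexOn ℝ Set.univ ψ) (hd : ∀ p, HasGradientAt ψ (ψ' p) p) (u v : E) :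
    ⟪ψ' u, v - u⟫ ≤ ψ v - ψ u := by
  set w := v - u with hw
  have hg := line_hasDerivAt ψ ψ' hd u w
  have hgc : ConvexOn ℝ Set.univ (fun s : ℝ => ψ (u + s • w)) := by
    refine ⟨convex_univ, ?_⟩
    intro p _ q _ a b ha hb hab
    have h2 := hc.2 (Set.mem_univ (u + p • w)) (Set.mem_univ (u + q • w)) ha hb hab
    have heq : a • (u + p • w) + b • (u + q • w) = (a + b) • u + (a * p + b * q) • w := by
      module
    rw [heq, hab, one_smul] at h2
    simpa [smul_eq_mul] using h2
  have hslope := hgc.le_slope_of_hasDerivAt (Set.mem_univ (0 : ℝ)) (Set.mem_univ (1 : ℝ))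
    one_pos (hg 0)
  have h0 : u + (0 : ℝ) • w = u := by simp
  have h1 : u + (1 : ℝ) • w = v := by simp [hw]
  rw [slope_def_field] at hslope
  rw [h0] at hslope
  have h1' : u + w = v := by simp [hw]
  simpa [h1, h1'] using hslope

/-- Descent lemma from a Lipschitz gradient. -/
lemma descent_lemma (ψ : E → ℝ) (ψ' : E → E) (C : ℝ) (hC : 0 ≤ C)
    (hd : ∀ p, HasGradientAt ψ (ψ' p) p)
    (hlip : ∀ p q, ‖ψ' p - ψ' q‖ ≤ C * ‖p - q‖) (u v : E) :
    ψ v ≤ ψ u + ⟪ψ' u, v - u⟫ + C / 2 * ‖v - u‖ ^ 2 := by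
  set w := v - u with hw
  have hg := line_hasDerivAt ψ ψ' hd u w
  set k : ℝ → ℝ := fun t => ψ u + t * ⟪ψ' u, w⟫ + C * ‖w‖ ^ 2 / 2 * t ^ 2 - ψ (u + t • w)
    with hk
  have hkd : ∀ t : ℝ, HasDerivAt k
      (⟪ψ' u, w⟫ + C * ‖w‖ ^ 2 * t - ⟪ψ' (u + t • w), w⟫) t := by
    intro t
    have h1 : HasDerivAt (fun t : ℝ => ψ u + t * ⟪ψ' u, w⟫ + C * ‖w‖ ^ 2 / 2 * t ^ 2)
        (⟪ψ' u, w⟫ + C * ‖w‖ ^ 2 / 2 * (2 * t)) t := by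
      have ha : HasDerivAt (fun t : ℝ => t * ⟪ψ' u, w⟫) ⟪ψ' u, w⟫ t := by
        simpa using (hasDerivAt_id t).mul_const ⟪ψ' u, w⟫
      have hb : HasDerivAt (fun t : ℝ => C * ‖w‖ ^ 2 / 2 * t ^ 2)
          (C * ‖w‖ ^ 2 / 2 * (2 * t)) t := by
        simpa using (hasDerivAt_pow 2 t).const_mul (C * ‖w‖ ^ 2 / 2)
      exact (ha.const_add (ψ u)).add hb
    have := h1.sub (hg t)
    refine this.congr_deriv ?_
    ring
  have hdiff : Differentiable ℝ k := fun t => (hkd t).differentiableAt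
  have hmono : MonotoneOn k (Set.Icc (0 : ℝ) 1) := by
    apply monotoneOn_of_deriv_nonneg (convex_Icc 0 1) hdiff.continuous.continuousOn
      hdiff.differentiableOn
    intro t ht
    rw [interior_Icc, Set.mem_Ioo] at ht
    rw [(hkd t).deriv]
    have h1 : ⟪ψ' (u + t • w), w⟫ - ⟪ψ' u, w⟫ = ⟪ψ' (u + t • w) - ψ' u, w⟫ := by
      rw [inner_sub_left]
    have h2 := real_inner_le_norm (ψ' (u + t • w) - ψ' u) w
    have h3 := hlip (u + t • w) u
    have h4 : ‖u + t • w - u‖ = t * ‖w‖ := by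
      simp [norm_smul, abs_of_pos ht.1]
    rw [h4] at h3
    nlinarith [norm_nonneg w, mul_le_mul_of_nonneg_right h3 (norm_nonneg w), h1, h2]
  have hle := hmono (Set.left_mem_Icc.2 zero_le_one) (Set.right_mem_Icc.2 zero_le_one)
    zero_le_one
  have hk0 : k 0 = 0 := by simp [hk]
  have hk1 : k 1 = ψ u + ⟪ψ' u, w⟫ + C * ‖w‖ ^ 2 / 2 - ψ v := by
    simp [hk, hw]
  rw [hk0, hk1] at hle
  nlinarith [hle]

/-- First-order optimality for the prox of a differentiable function. -/
lemma prox_grad_eq (ψ : E → ℝ) (ψ' : E → E) (hd : ∀ p, HasGradientAt ψ (ψ' p) p)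
    (xx v : E) (hmin : ∀ u, ψ v + 1 / 2 * ‖v - xx‖ ^ 2 ≤ ψ u + 1 / 2 * ‖u - xx‖ ^ 2) :
    ψ' v = xx - v := by
  have hq : HasGradientAt (fun u : E => 1 / 2 * ‖u - xx‖ ^ 2) (v - xx) v := by
    have := hasGradientAt_const_mul_norm_sq (1 / 2 : ℝ) xx v
    convert this using 1
    norm_num
  have hsum : HasFDerivAt (fun u : E => ψ u + 1 / 2 * ‖u - xx‖ ^ 2)
      (InnerProductSpace.toDual ℝ E (ψ' v) + InnerProductSpace.toDual ℝ E (v - xx)) v :=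
    ((hd v).hasFDerivAt).add hq.hasFDerivAt
  have hlocal : IsLocalMin (fun u : E => ψ u + 1 / 2 * ‖u - xx‖ ^ 2) v :=
    Filter.Eventually.of_forall hmin
  have hzero := hlocal.hasFDerivAt_eq_zero hsum
  have h2 : InnerProductSpace.toDual ℝ E (ψ' v + (v - xx)) = InnerProductSpace.toDual ℝ E 0 := by
    rw [map_add, map_zero, hzero]
  have h3 := (InnerProductSpace.toDual ℝ E).injective h2
  have h4 : ψ' v + (v - xx) = 0 := h3
  rw [add_eq_zero_iff_eq_neg] at h4
  rw [h4]; abel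

/-- Key quadratic inequality for the DRS descent step. -/
lemma keyB_scalar (β L M δ W2 E2 Q Lf : ℝ)
    (hβ0 : 0 < β) (hL0 : 0 ≤ L) (hL1 : L < 1) (hM : M = L / (L + 1))
    (hLf : Lf = L / (1 - L))
    (hδ : δ = 1 / 2 * (1 - L) ^ 2 * (1 / β * (1 - L ^ 2 / (1 - L) ^ 2) - (1 + M)))
    (hδpos : 0 < δ)
    (hW2 : 0 ≤ W2) (hE2 : 0 ≤ E2)
    (h1 : 4 * β ^ 2 * W2 - 4 * β * Q + E2 ≤ Lf ^ 2 * E2)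
    (h2 : (1 - L) ^ 2 * (4 * β ^ 2) * W2 ≤ E2) :
    -(2 * β) * W2 + 2 * Q - (1 + M) / 2 * E2 ≥ δ * (4 * β ^ 2 * W2) := by
  have hL1' : (0:ℝ) < 1 - L := by linarith
  set γ : ℝ := (1 - Lf ^ 2) - β * (1 + M) with hγ
  have hγδ : γ * (1 - L) ^ 2 = 2 * β * δ := by
    rw [hγ, hδ, hLf]
    field_simp
  have hγ0 : 0 ≤ γ := by
    nlinarith [sq_nonneg (1 - L), mul_pos hβ0 hδpos]
  have hh2 := mul_le_mul_of_nonneg_left h2 hγ0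
  set X : ℝ := -(2 * β) * W2 + 2 * Q - (1 + M) / 2 * E2 with hX
  have step1 : 2 * β * X - γ * E2 =
      Lf ^ 2 * E2 - (4 * β ^ 2 * W2 - 4 * β * Q + E2) := by
    rw [hX, hγ]; ring
  have step1' : γ * E2 ≤ 2 * β * X := by linarith [h1, step1]
  have step2 : γ * ((1 - L) ^ 2 * (4 * β ^ 2) * W2) = 2 * β * (δ * (4 * β ^ 2 * W2)) := by
    linear_combination (4 * β ^ 2 * W2) * hγδ
  have step3 : 2 * β * (δ * (4 * β ^ 2 * W2)) ≤ 2 * β * X := by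
    rw [← step2]; linarith [hh2]
  have h2β : (0:ℝ) < 2 * β := by linarith
  exact (mul_le_mul_iff_right₀ h2β).1 step3

/-- Weak convexity inequality. -/
lemma weak_convex_ineq (φ : E → ℝ) (φ' : E → E) (M : ℝ)
    (hφwc : ConvexOn ℝ Set.univ (fun x => φ x + M / 2 * ‖x‖ ^ 2))
    (hφdiff : ∀ x, HasGradientAt φ (φ' x) x) (u v : E) :
    φ u + ⟪φ' u, v - u⟫ - M / 2 * ‖v - u‖ ^ 2 ≤ φ v := by
  have hψd : ∀ p : E, HasGradientAt (fun x => φ x + M / 2 * ‖x‖ ^ 2) (φ' p + M • p) p := by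
    intro p
    have hq0 := hasGradientAt_const_mul_norm_sq (M / 2) 0 p
    simp only [sub_zero] at hq0
    have hc : (2 * (M / 2) : ℝ) = M := by ring
    rw [hc] at hq0
    rw [hasGradientAt_iff_hasFDerivAt, map_add]
    exact ((hφdiff p).hasFDerivAt).add hq0.hasFDerivAt
  have h := convex_gradient_ineq _ _ hφwc hψd u v
  simp only [inner_add_left, real_inner_smul_left] at h
  have e1 : ⟪u, v - u⟫ = ⟪u, v⟫ - ‖u‖ ^ 2 := by
    rw [inner_sub_right, real_inner_self_eq_norm_sq]
  have e2 : ‖v - u‖ ^ 2 = ‖v‖ ^ 2 - 2 * ⟪v, u⟫ + ‖u‖ ^ 2 := norm_sub_sq_real v u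
  have e3 : ⟪v, u⟫ = ⟪u, v⟫ := real_inner_comm u v
  rw [e1] at h
  rw [e2, e3]
  linarith [h]

/-- Key vector inequality for the DRS descent step. -/
lemma keyB (β L M δ : ℝ)
    (hβ0 : 0 < β) (hL0 : 0 ≤ L) (hL1 : L < 1) (hM : M = L / (L + 1))
    (hδ : δ = 1 / 2 * (1 - L) ^ 2 * (1 / β * (1 - L ^ 2 / (1 - L) ^ 2) - (1 + M)))
    (hδpos : 0 < δ) (a0 Y0 Z0 a1 Y1 : E)
    (hstep : a1 = a0 + (2 * β) • (Z0 - Y0))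
    (hlip : ‖(a1 - Y1) - (a0 - Y0)‖ ≤ L / (1 - L) * ‖Y1 - Y0‖) :
    ⟪a1 - Y1, Y0 - Y1⟫ - M / 2 * ‖Y0 - Y1‖ ^ 2 + ⟪Y0 - a0, Y0 - Z0⟫ - ⟪Y1 - a1, Y1 - Z0⟫
      + 1 / 2 * ‖Y0 - Z0‖ ^ 2 - 1 / 2 * ‖Y1 - Z0‖ ^ 2 ≥ δ * ‖a1 - a0‖ ^ 2 := by
  have hL1' : (0:ℝ) < 1 - L := by linarith
  have harg : (a1 - Y1) - (a0 - Y0) = (2 * β) • (Z0 - Y0) - (Y1 - Y0) := by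
    rw [hstep]; abel
  rw [harg] at hlip
  have hnsm : ‖(2 * β) • (Z0 - Y0)‖ = 2 * β * ‖Z0 - Y0‖ := by
    rw [norm_smul, Real.norm_eq_abs, abs_of_pos (by linarith : (0:ℝ) < 2 * β)]
  have hexp : ‖(2 * β) • (Z0 - Y0) - (Y1 - Y0)‖ ^ 2 =
      4 * β ^ 2 * ‖Z0 - Y0‖ ^ 2 - 4 * β * ⟪Y1 - Y0, Z0 - Y0⟫ + ‖Y1 - Y0‖ ^ 2 := by
    rw [norm_sub_sq_real, hnsm, real_inner_smul_left, real_inner_comm (Z0 - Y0) (Y1 - Y0)]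
    ring
  have h1sq := pow_le_pow_left₀ (norm_nonneg ((2 * β) • (Z0 - Y0) - (Y1 - Y0))) hlip 2
  rw [mul_pow, hexp] at h1sq
  -- lower bound on ‖e‖
  have htri : ‖(2 * β) • (Z0 - Y0)‖ ≤ ‖Y1 - Y0‖ + ‖(2 * β) • (Z0 - Y0) - (Y1 - Y0)‖ := by
    have := norm_add_le (Y1 - Y0) ((2 * β) • (Z0 - Y0) - (Y1 - Y0))
    simpa using this
  have h2lin : (1 - L) * (2 * β * ‖Z0 - Y0‖) ≤ ‖Y1 - Y0‖ := by
    have hub : ‖(2 * β) • (Z0 - Y0)‖ ≤ (1 + L / (1 - L)) * ‖Y1 - Y0‖ := by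
      calc ‖(2 * β) • (Z0 - Y0)‖ ≤ ‖Y1 - Y0‖ + ‖(2 * β) • (Z0 - Y0) - (Y1 - Y0)‖ := htri
        _ ≤ ‖Y1 - Y0‖ + L / (1 - L) * ‖Y1 - Y0‖ := by linarith [hlip]
        _ = (1 + L / (1 - L)) * ‖Y1 - Y0‖ := by ring
    rw [hnsm] at hub
    have hmul := mul_le_mul_of_nonneg_left hub hL1'.le
    have hfac : (1 - L) * ((1 + L / (1 - L)) * ‖Y1 - Y0‖) = ‖Y1 - Y0‖ := by
      field_simp
      ring
    linarith [hmul, hfac]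
  have h2 : (1 - L) ^ 2 * (4 * β ^ 2) * ‖Z0 - Y0‖ ^ 2 ≤ ‖Y1 - Y0‖ ^ 2 := by
    have h0 : (0:ℝ) ≤ (1 - L) * (2 * β * ‖Z0 - Y0‖) := by positivity
    have := pow_le_pow_left₀ h0 h2lin 2
    calc (1 - L) ^ 2 * (4 * β ^ 2) * ‖Z0 - Y0‖ ^ 2
        = ((1 - L) * (2 * β * ‖Z0 - Y0‖)) ^ 2 := by ring
      _ ≤ ‖Y1 - Y0‖ ^ 2 := this
  have key := keyB_scalar β L M δ (‖Z0 - Y0‖ ^ 2) (‖Y1 - Y0‖ ^ 2) (⟪Y1 - Y0, Z0 - Y0⟫)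
    (L / (1 - L)) hβ0 hL0 hL1 hM rfl hδ hδpos (sq_nonneg _) (sq_nonneg _) h1sq h2
  -- identify the left-hand side
  have e1 : a1 - Y1 = (a0 - Y0) + (2 * β) • (Z0 - Y0) - (Y1 - Y0) := by rw [hstep]; abel
  have e2 : Y0 - Y1 = -(Y1 - Y0) := by abel
  have e3 : Y0 - a0 = -(a0 - Y0) := by abel
  have e4 : Y0 - Z0 = -(Z0 - Y0) := by abel
  have e5 : Y1 - Z0 = (Y1 - Y0) - (Z0 - Y0) := by abel
  have e7 : a1 - a0 = (2 * β) • (Z0 - Y0) := by rw [hstep]; abel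
  have hid : ⟪a1 - Y1, Y0 - Y1⟫ - M / 2 * ‖Y0 - Y1‖ ^ 2 + ⟪Y0 - a0, Y0 - Z0⟫
      - ⟪Y1 - a1, Y1 - Z0⟫ + 1 / 2 * ‖Y0 - Z0‖ ^ 2 - 1 / 2 * ‖Y1 - Z0‖ ^ 2 =
      -(2 * β) * ‖Z0 - Y0‖ ^ 2 + 2 * ⟪Y1 - Y0, Z0 - Y0⟫
        - (1 + M) / 2 * ‖Y1 - Y0‖ ^ 2 := by
    have e6 : Y1 - a1 = -((a0 - Y0) + (2 * β) • (Z0 - Y0) - (Y1 - Y0)) := by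
      rw [hstep]; abel
    rw [e1, e2, e3, e4, e5, e6, norm_neg, norm_neg]
    simp only [inner_add_left, inner_sub_left, inner_neg_left, inner_neg_right,
      inner_sub_right, inner_add_right, real_inner_smul_left, real_inner_smul_right,
      real_inner_self_eq_norm_sq, norm_sub_sq_real,
      real_inner_comm Y0 Y1, real_inner_comm Y0 Z0, real_inner_comm Y1 Z0,
      real_inner_comm Y0 a0, real_inner_comm Y1 a0, real_inner_comm Z0 a0]
    ring
  rw [hid]
  have hrhs' : δ * ‖a1 - a0‖ ^ 2 = δ * (4 * β ^ 2 * ‖Z0 - Y0‖ ^ 2) := by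
    rw [e7]
    have : ‖(2 * β) • (Z0 - Y0)‖ ^ 2 = (2 * β * ‖Z0 - Y0‖) ^ 2 := by rw [hnsm]
    rw [this]; ring
  rw [hrhs']
  linarith [key]


set_option maxHeartbeats 1000000 in
/-- Residual rate for ProxPnP-DRS: with `0 ≤ L < 1`, `φ` differentiable,
`M = L/(L+1)`-weakly convex, bounded below, `∇φ` `(L/(1−L))`-Lipschitz; `f` bounded below;
`λ > 0`; `β ∈ (0,1)` with `β(2L³−3L²+1) + (2L²+L−1) < 0`; DRS iterates as in the
ProxPnP-DRS algorithm; `F^{DR}_k = F^{DR}(x_{k−1}, y_k, z_k)`,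
`δ = (1/2)(1−L)²((1/β)(1 − L²/(1−L)²) − (1+M))`, `B = λ·inf f + inf φ`:
then `δ > 0`, `F^{DR}_k ≥ B` for `k ≥ 1`, for `k ≥ 1`
`F^{DR}_k − F^{DR}_{k+1} ≥ δ‖x_k − x_{k−1}‖²` with
`δ‖x_k − x_{k−1}‖² = 4β²δ‖z_k − y_k‖²`, and for every `K ≥ 1`,
`min_{1 ≤ k ≤ K} ‖z_k − y_k‖² ≤ (F^{DR}_1 − B)/(4β²δK)`; in particular
`‖y_k − z_k‖ → 0`. -/
theorem proxPnP_DRS_residual_rate {n : ℕ}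
    (f : EuclideanSpace ℝ (Fin n) → ℝ)
    (φ : EuclideanSpace ℝ (Fin n) → ℝ)
    (φ' : EuclideanSpace ℝ (Fin n) → EuclideanSpace ℝ (Fin n))
    (L M lam β : ℝ) (hL0 : 0 ≤ L) (hL1 : L < 1) (hM : M = L / (L + 1))
    (hφdiff : ∀ x, HasGradientAt φ (φ' x) x)
    (hφwc : ConvexOn ℝ Set.univ (fun x => φ x + M / 2 * ‖x‖ ^ 2))
    (hφbd : ∃ c, ∀ x, c ≤ φ x)
    (hφlip : ∀ u v, ‖φ' u - φ' v‖ ≤ L / (1 - L) * ‖u - v‖)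
    (hfbd : ∃ c, ∀ x, c ≤ f x)
    (hlam : 0 < lam) (hβ : β ∈ Set.Ioo (0 : ℝ) 1)
    (hβL : β * (2 * L ^ 3 - 3 * L ^ 2 + 1) + (2 * L ^ 2 + L - 1) < 0)
    (x y z : ℕ → EuclideanSpace ℝ (Fin n))
    (hy : ∀ k, ∀ u,
      φ (y (k + 1)) + 1 / 2 * ‖y (k + 1) - x k‖ ^ 2 ≤
        φ u + 1 / 2 * ‖u - x k‖ ^ 2)
    (hyuniq : ∀ k, ∀ u,
      (∀ w, φ u + 1 / 2 * ‖u - x k‖ ^ 2 ≤ φ w + 1 / 2 * ‖w - x k‖ ^ 2) → u = y (k + 1))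
    (hz : ∀ k, ∀ u,
      lam * f (z (k + 1)) + 1 / 2 * ‖z (k + 1) - (2 • y (k + 1) - x k)‖ ^ 2 ≤
        lam * f u + 1 / 2 * ‖u - (2 • y (k + 1) - x k)‖ ^ 2)
    (hxs : ∀ k, x (k + 1) = x k + (2 * β) • (z (k + 1) - y (k + 1)))
    (FDR : ℕ → ℝ)
    (hFDR : ∀ k, FDR k =
      lam * f (z k) + φ (y k) + ⟪y k - x (k - 1), y k - z k⟫ + 1 / 2 * ‖y k - z k‖ ^ 2)
    (δ B : ℝ)
    (hδ : δ = 1 / 2 * (1 - L) ^ 2 * (1 / β * (1 - L ^ 2 / (1 - L) ^ 2) - (1 + M)))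
    (hB : B = lam * (⨅ u, f u) + ⨅ u, φ u) :
    0 < δ ∧
    (∀ k : ℕ, 1 ≤ k → B ≤ FDR k) ∧
    (∀ k : ℕ, 1 ≤ k →
      FDR k - FDR (k + 1) ≥ δ * ‖x k - x (k - 1)‖ ^ 2 ∧
      δ * ‖x k - x (k - 1)‖ ^ 2 = 4 * β ^ 2 * δ * ‖z k - y k‖ ^ 2) ∧
    (∀ K : ℕ, 1 ≤ K → ∃ k : ℕ, 1 ≤ k ∧ k ≤ K ∧
      ‖z k - y k‖ ^ 2 ≤ (FDR 1 - B) / (4 * β ^ 2 * δ * K)) ∧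
    Filter.Tendsto (fun k => ‖y k - z k‖) Filter.atTop (nhds 0) := by
  obtain ⟨hβ0, hβ1⟩ := hβ
  have hL1' : (0:ℝ) < 1 - L := by linarith
  -- δ > 0
  have hδpos : 0 < δ := by
    have hid : δ * (2 * β * (L + 1)) =
        -(β * (2 * L ^ 3 - 3 * L ^ 2 + 1) + (2 * L ^ 2 + L - 1)) := by
      rw [hδ, hM]
      field_simp
      ring
    have h2 : (0:ℝ) < 2 * β * (L + 1) := by positivity
    have h3 : 0 < δ * (2 * β * (L + 1)) := by rw [hid]; linarith
    by_contra h
    push_neg at h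
    nlinarith [h2, h3]
  -- L < 1/2
  have hcube : (0:ℝ) ≤ 2 * L ^ 3 - 3 * L ^ 2 + 1 := by nlinarith [sq_nonneg (1 - L), hL0]
  have hquad : 2 * L ^ 2 + L - 1 < 0 := by nlinarith [mul_nonneg hβ0.le hcube]
  have hLhalf : L < 1 / 2 := by nlinarith [hL0]
  -- gradient relations
  have hgrad : ∀ k, φ' (y (k + 1)) = x k - y (k + 1) := fun k =>
    prox_grad_eq φ φ' hφdiff (x k) (y (k + 1)) (hy k)
  have hwc := weak_convex_ineq φ φ' M hφwc hφdiff
  have hLf0 : 0 ≤ L / (1 - L) := div_nonneg hL0 hL1'.le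
  have hdescφ := descent_lemma φ φ' (L / (1 - L)) hLf0 hφdiff hφlip
  -- infima
  obtain ⟨cf, hcf⟩ := hfbd
  obtain ⟨cφ, hcφ⟩ := hφbd
  have hbf : BddBelow (Set.range f) := ⟨cf, by rintro _ ⟨u, rfl⟩; exact hcf u⟩
  have hbφ : BddBelow (Set.range φ) := ⟨cφ, by rintro _ ⟨u, rfl⟩; exact hcφ u⟩
  have hinf_f : ∀ u, (⨅ v, f v) ≤ f u := fun u => ciInf_le hbf u
  have hinf_φ : ∀ u, (⨅ v, φ v) ≤ φ u := fun u => ciInf_le hbφ u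
  -- envelope formula at shifted indices
  have hFDR' : ∀ j : ℕ, FDR (j + 1) =
      lam * f (z (j + 1)) + φ (y (j + 1)) + ⟪y (j + 1) - x j, y (j + 1) - z (j + 1)⟫
        + 1 / 2 * ‖y (j + 1) - z (j + 1)‖ ^ 2 := by
    intro j
    have := hFDR (j + 1)
    simpa using this
  -- lower bound B ≤ FDR (j+1)
  have hlow : ∀ j : ℕ, B ≤ FDR (j + 1) := by
    intro j
    rw [hFDR' j, hB]
    have hyx : y (j + 1) - x j = -(φ' (y (j + 1))) := by rw [hgrad j]; abel
    have hi : ⟪y (j + 1) - x j, y (j + 1) - z (j + 1)⟫ =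
        ⟪φ' (y (j + 1)), z (j + 1) - y (j + 1)⟫ := by
      rw [hyx, inner_neg_left, show y (j + 1) - z (j + 1) = -(z (j + 1) - y (j + 1)) by abel,
        inner_neg_right]
      ring
    have hd := hdescφ (y (j + 1)) (z (j + 1))
    have h1 : lam * (⨅ u, f u) ≤ lam * f (z (j + 1)) :=
      mul_le_mul_of_nonneg_left (hinf_f _) hlam.le
    have h2 : (⨅ u, φ u) ≤ φ (z (j + 1)) := hinf_φ _
    have hLfle : L / (1 - L) ≤ 1 := by
      rw [div_le_one hL1']; linarith
    have hns : ‖z (j + 1) - y (j + 1)‖ ^ 2 = ‖y (j + 1) - z (j + 1)‖ ^ 2 := by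
      rw [norm_sub_rev]
    rw [hns] at hd
    have hquad2 : L / (1 - L) / 2 * ‖y (j + 1) - z (j + 1)‖ ^ 2 ≤
        1 / 2 * ‖y (j + 1) - z (j + 1)‖ ^ 2 := by
      have := sq_nonneg ‖y (j + 1) - z (j + 1)‖
      nlinarith
    rw [hi]
    linarith [hd, h1, h2, hquad2]
  -- per-step descent
  have hnormeq : ∀ j : ℕ, ‖x (j + 1) - x j‖ ^ 2 = 4 * β ^ 2 * ‖z (j + 1) - y (j + 1)‖ ^ 2 := by
    intro j
    have : x (j + 1) - x j = (2 * β) • (z (j + 1) - y (j + 1)) := by rw [hxs j]; abel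
    rw [this, norm_smul, Real.norm_eq_abs, abs_of_pos (by linarith : (0:ℝ) < 2 * β), mul_pow]
    ring
  have hstepineq : ∀ j : ℕ, FDR (j + 1) - FDR (j + 2) ≥ δ * ‖x (j + 1) - x j‖ ^ 2 := by
    intro j
    have hstep : x (j + 1) = x j + (2 * β) • (z (j + 1) - y (j + 1)) := hxs j
    -- step A : minimality of z (j+2)
    have hzmin := hz (j + 1) (z (j + 1))
    have hqid : ∀ u : EuclideanSpace ℝ (Fin n),
        ⟪y (j + 2) - x (j + 1), y (j + 2) - u⟫ + 1 / 2 * ‖y (j + 2) - u‖ ^ 2 =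
          1 / 2 * ‖u - (2 • y (j + 2) - x (j + 1))‖ ^ 2
            - 1 / 2 * ‖x (j + 1) - y (j + 2)‖ ^ 2 := by
      intro u
      have hvec : u - (2 • y (j + 2) - x (j + 1)) =
          (u - y (j + 2)) + (x (j + 1) - y (j + 2)) := by
        rw [two_nsmul]; abel
      have hin : ⟪y (j + 2) - x (j + 1), y (j + 2) - u⟫ =
          ⟪u - y (j + 2), x (j + 1) - y (j + 2)⟫ := by
        rw [show y (j + 2) - x (j + 1) = -(x (j + 1) - y (j + 2)) by abel,
          show y (j + 2) - u = -(u - y (j + 2)) by abel, inner_neg_neg, real_inner_comm]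
      rw [hvec, norm_add_sq_real, hin, norm_sub_rev (y (j + 2)) u]
      ring
    have hA : FDR (j + 2) ≤ lam * f (z (j + 1)) + φ (y (j + 2))
        + ⟪y (j + 2) - x (j + 1), y (j + 2) - z (j + 1)⟫
        + 1 / 2 * ‖y (j + 2) - z (j + 1)‖ ^ 2 := by
      have e1 := hqid (z (j + 2))
      have e2 := hqid (z (j + 1))
      have := hFDR' (j + 1)
      rw [show j + 1 + 1 = j + 2 from rfl] at this
      rw [this]
      linarith [hzmin, e1, e2]
    -- step B
    have hwcB := hwc (y (j + 2)) (y (j + 1))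
    have hg1 : φ' (y (j + 2)) = x (j + 1) - y (j + 2) := hgrad (j + 1)
    have hg0 : φ' (y (j + 1)) = x j - y (j + 1) := hgrad j
    rw [hg1] at hwcB
    have hlipB : ‖(x (j + 1) - y (j + 2)) - (x j - y (j + 1))‖ ≤
        L / (1 - L) * ‖y (j + 2) - y (j + 1)‖ := by
      have := hφlip (y (j + 2)) (y (j + 1))
      rw [hg1, hg0] at this
      exact this
    have hkey := keyB β L M δ hβ0 hL0 hL1 hM hδ hδpos
      (x j) (y (j + 1)) (z (j + 1)) (x (j + 1)) (y (j + 2)) hstep hlipB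
    rw [hFDR' j]
    have hno : ‖x (j + 1) - x j‖ ^ 2 = ‖x (j + 1) - x j‖ ^ 2 := rfl
    linarith [hA, hwcB, hkey]
  refine ⟨hδpos, ?_, ?_, ?_, ?_⟩
  · intro k hk
    obtain ⟨j, rfl⟩ : ∃ j, k = j + 1 := ⟨k - 1, (Nat.succ_pred_eq_of_pos hk).symm⟩
    exact hlow j
  · intro k hk
    obtain ⟨j, rfl⟩ : ∃ j, k = j + 1 := ⟨k - 1, (Nat.succ_pred_eq_of_pos hk).symm⟩
    constructor
    · have := hstepineq j
      simpa using this
    · have h1 := hnormeq j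
      simp only [Nat.add_sub_cancel]
      rw [h1]; ring
  · -- rate
    intro K hK
    obtain ⟨k₀, hk₀mem, hk₀min⟩ := Finset.exists_min_image (Finset.Icc 1 K)
      (fun k => ‖z k - y k‖ ^ 2) ⟨1, by simp [hK]⟩
    rw [Finset.mem_Icc] at hk₀mem
    refine ⟨k₀, hk₀mem.1, hk₀mem.2, ?_⟩
    have htel : ∑ j ∈ Finset.range K, (FDR (j + 1) - FDR (j + 2)) = FDR 1 - FDR (K + 1) := by
      have := Finset.sum_range_sub' (fun j => FDR (j + 1)) K
      simpa using this
    have hsum1 : ∑ j ∈ Finset.range K, (4 * β ^ 2 * δ * ‖z k₀ - y k₀‖ ^ 2) ≤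
        ∑ j ∈ Finset.range K, (FDR (j + 1) - FDR (j + 2)) := by
      apply Finset.sum_le_sum
      intro j hj
      rw [Finset.mem_range] at hj
      have hmin := hk₀min (j + 1) (Finset.mem_Icc.2 ⟨Nat.le_add_left 1 j, hj⟩)
      have hs := hstepineq j
      rw [hnormeq j] at hs
      have hfac : (0:ℝ) ≤ 4 * β ^ 2 * δ := by positivity
      nlinarith [mul_le_mul_of_nonneg_left hmin hfac]
    have hKpos : (0:ℝ) < (K:ℝ) := by exact_mod_cast hK
    have hc : (0:ℝ) < 4 * β ^ 2 * δ * K := by positivity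
    have hsum2 : (K:ℝ) * (4 * β ^ 2 * δ * ‖z k₀ - y k₀‖ ^ 2) ≤ FDR 1 - B := by
      have := le_trans hsum1 (le_of_eq htel)
      rw [Finset.sum_const, Finset.card_range, nsmul_eq_mul] at this
      linarith [hlow K, this]
    rw [le_div_iff₀ hc]
    linarith [hsum2]
  · -- convergence
    have hsumle : ∀ K : ℕ,
        ∑ j ∈ Finset.range K, (4 * β ^ 2 * δ * ‖z (j + 1) - y (j + 1)‖ ^ 2) ≤ FDR 1 - B := by
      intro K
      have htel : ∑ j ∈ Finset.range K, (FDR (j + 1) - FDR (j + 2)) = FDR 1 - FDR (K + 1) := by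
        have := Finset.sum_range_sub' (fun j => FDR (j + 1)) K
        simpa using this
      have hsum1 : ∑ j ∈ Finset.range K, (4 * β ^ 2 * δ * ‖z (j + 1) - y (j + 1)‖ ^ 2) ≤
          ∑ j ∈ Finset.range K, (FDR (j + 1) - FDR (j + 2)) := by
        apply Finset.sum_le_sum
        intro j _
        have hs := hstepineq j
        rw [hnormeq j] at hs
        linarith [hs]
      calc ∑ j ∈ Finset.range K, (4 * β ^ 2 * δ * ‖z (j + 1) - y (j + 1)‖ ^ 2)
          ≤ FDR 1 - FDR (K + 1) := le_trans hsum1 (le_of_eq htel)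
        _ ≤ FDR 1 - B := by linarith [hlow K]
    have hsummable : Summable (fun j => 4 * β ^ 2 * δ * ‖z (j + 1) - y (j + 1)‖ ^ 2) :=
      summable_of_sum_range_le (fun j => by positivity) hsumle
    have ht0 := hsummable.tendsto_atTop_zero
    have hcne : (4 * β ^ 2 * δ) ≠ 0 := by positivity
    have ht1 : Filter.Tendsto (fun j => ‖z (j + 1) - y (j + 1)‖ ^ 2)
        Filter.atTop (nhds 0) := by
      have := ht0.const_mul (4 * β ^ 2 * δ)⁻¹
      rw [mul_zero] at this
      convert this using 2 with j
      field_simp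
    have ht2 : Filter.Tendsto (fun j => ‖z (j + 1) - y (j + 1)‖)
        Filter.atTop (nhds 0) := by
      have := ht1.sqrt
      rw [Real.sqrt_zero] at this
      convert this using 2 with j
      rw [Real.sqrt_sq (norm_nonneg _)]
    have heq : (fun k => ‖y k - z k‖) = fun k => ‖z k - y k‖ := by
      funext k; rw [norm_sub_rev]
    rw [heq]
    exact (Filter.tendsto_add_atTop_iff_nat 1).1 ht2
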